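/- arXiv:1306.1427 — 4 statements merged into one kernel-verified Lean document; each statement's English description precedes it below -/
import Mathlib

section
/- Let a < 0, c > 0, d real, and φ the λ=0 first return map φ(x,y) = ((2ax + Δ)/(4a), y + d(2ax + Δ)/(2ac)) with Δ = -sqrt(-12 a^2 (x^2 + 4y)). Then the image under φ of the curve {(0, y) : y < 0} is the curve {(x, -x^2/3 + 2dx/c) : x > 0}. -/
/-- the image under φ of {(0, y) : y < 0} is
{(x, -x²/3 + 2dx/c) : x > 0}. -/
theorem image_of_negative_axis (a c d : ℝ) (ha : a < 0) (hc : 0 < c)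
    (φ : ℝ × ℝ → ℝ × ℝ)
    (hφ : ∀ x y : ℝ, φ (x, y) =
      ((2 * a * x + (-Real.sqrt (-12 * a ^ 2 * (x ^ 2 + 4 * y)))) / (4 * a),
        y + d * (2 * a * x + (-Real.sqrt (-12 * a ^ 2 * (x ^ 2 + 4 * y)))) / (2 * a * c))) :
    φ '' {p : ℝ × ℝ | ∃ y : ℝ, y < 0 ∧ p = (0, y)} =
      {p : ℝ × ℝ | ∃ x : ℝ, 0 < x ∧ p = (x, -x ^ 2 / 3 + 2 * d * x / c)} := by
  have ha' : a ≠ 0 := ne_of_lt ha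
  have hc' : c ≠ 0 := ne_of_gt hc
  ext p
  simp only [Set.mem_image, Set.mem_setOf_eq]
  constructor
  · rintro ⟨q, ⟨y, hy, rfl⟩, rfl⟩
    set s := Real.sqrt (-12 * a ^ 2 * (0 ^ 2 + 4 * y)) with hs
    have hs2 : s ^ 2 = -48 * a ^ 2 * y := by
      rw [hs, Real.sq_sqrt (by nlinarith)]; ring
    have ha2 : (0:ℝ) < a ^ 2 := by positivity
    have hsnn : 0 ≤ s := Real.sqrt_nonneg _
    have hspos : 0 < s := by
      rcases hsnn.lt_or_eq with h | h
      · exact h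
      · exfalso; nlinarith
    refine ⟨-s / (4 * a), div_pos_of_neg_of_neg (by linarith) (by linarith), ?_⟩
    have h1 : (-s / (4 * a)) ^ 2 = -3 * y := by
      field_simp; linear_combination hs2
    rw [hφ, ← hs, h1]
    simp only [Prod.mk.injEq]
    constructor <;> field_simp <;> ring
  · rintro ⟨x, hx, rfl⟩
    refine ⟨(0, -x ^ 2 / 3), ⟨-x ^ 2 / 3, by nlinarith, rfl⟩, ?_⟩
    rw [hφ]
    have hsqrt : Real.sqrt (-12 * a ^ 2 * (0 ^ 2 + 4 * (-x ^ 2 / 3))) = -4 * a * x := by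
      rw [show -12 * a ^ 2 * (0 ^ 2 + 4 * (-x ^ 2 / 3)) = (-4 * a * x) ^ 2 by ring,
        Real.sqrt_sq (by nlinarith)]
    rw [hsqrt]
    simp only [Prod.mk.injEq]
    constructor <;> field_simp <;> ring
end

section
/- Let a < 0, c > 0, d real, and φ the λ=0 first return map φ(x,y) = ((2ax + Δ)/(4a), y + d(2ax + Δ)/(2ac)) with Δ = -sqrt(-12 a^2 (x^2+4y)). If x_0 > 0 and y_0 < -x_0^2, then φ(x_0, y_0) lies strictly between the parabolas y = -x^2/3 + 2dx/c and y = -x^2/4 + 2dx/c, i.e. writing (x_1, y_1) = φ(x_0, y_0) one has x_1 > 0 and -x_1^2/3 + 2 d x_1/c < y_1 < -x_1^2/4 + 2 d x_1/c. -/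
/-- the image under φ of Σ^{c+} = {x>0, y<-x²} lies strictly
between the parabolas y = -x²/3 + 2dx/c and y = -x²/4 + 2dx/c. -/
theorem image_between_parabolas (a c d : ℝ) (ha : a < 0) (hc : 0 < c)
    (φ : ℝ × ℝ → ℝ × ℝ)
    (hφ : ∀ x y : ℝ, φ (x, y) =
      ((2 * a * x + (-Real.sqrt (-12 * a ^ 2 * (x ^ 2 + 4 * y)))) / (4 * a),
        y + d * (2 * a * x + (-Real.sqrt (-12 * a ^ 2 * (x ^ 2 + 4 * y)))) / (2 * a * c)))
    (x0 y0 : ℝ) (hx0 : 0 < x0) (hy0 : y0 < -x0 ^ 2) :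
    0 < (φ (x0, y0)).1 ∧
      -(φ (x0, y0)).1 ^ 2 / 3 + 2 * d * (φ (x0, y0)).1 / c < (φ (x0, y0)).2 ∧
      (φ (x0, y0)).2 < -(φ (x0, y0)).1 ^ 2 / 4 + 2 * d * (φ (x0, y0)).1 / c := by
  rw [hφ x0 y0]
  have ha' : a ≠ 0 := ha.ne
  have hc' : c ≠ 0 := hc.ne'
  set t := Real.sqrt (-12 * a ^ 2 * (x0 ^ 2 + 4 * y0)) with htdef
  have harg : 0 < -12 * a ^ 2 * (x0 ^ 2 + 4 * y0) := by nlinarith [sq_nonneg a, sq_nonneg x0, mul_pos (mul_pos_of_neg_of_neg ha ha) (show (0:ℝ) < -x0^2 - y0 by nlinarith)]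
  have ht2 : t ^ 2 = -12 * a ^ 2 * (x0 ^ 2 + 4 * y0) := Real.sq_sqrt harg.le
  have ht0 : 0 < t := Real.sqrt_pos.mpr harg
  set w := t / (-2 * a) with hwdef
  have hw2 : w ^ 2 = -3 * x0 ^ 2 - 12 * y0 := by
    rw [hwdef, div_pow, ht2]
    field_simp
    ring
  have hwpos : 0 < w := div_pos ht0 (by linarith)
  have hwgt : 3 * x0 < w := by nlinarith
  have hx1 : (2 * a * x0 + -t) / (4 * a) = (x0 + w) / 2 := by
    rw [hwdef]; field_simp; ring
  have hy1 : y0 + d * (2 * a * x0 + -t) / (2 * a * c) = y0 + 2 * d * ((x0 + w) / 2) / c := by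
    rw [hwdef]; field_simp
  simp only [hx1, hy1]
  have key1 : -((x0 + w) / 2) ^ 2 / 3 < y0 := by
    nlinarith [mul_pos hx0 (show 0 < w - x0 by linarith)]
  have key2 : y0 < -((x0 + w) / 2) ^ 2 / 4 := by
    nlinarith [mul_pos (sub_pos.mpr hwgt) (sub_pos.mpr hwgt)]
  exact ⟨by linarith, by linarith, by linarith⟩
end

section
/- Let a < 0, c > 0, d < 0 and λ < 0 with Δ_2 := (ad)^2 - adcλ > 0. Then the two eigenvalues ξ_± = (2ad - cλ ± 2 sqrt(Δ_2))/(cλ) satisfy ξ_+ · ξ_- = 1 and ξ_+ ≠ ξ_-, and exactly one of them has absolute value greater than 1; hence the origin is a hyperbolic saddle fixed point of the linearized first return map. -/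
/-- for λ < 0 with Δ₂ = (ad)² - adcλ > 0, the eigenvalues
ξ± = (2ad - cλ ± 2√Δ₂)/(cλ) satisfy ξ₊ξ₋ = 1, ξ₊ ≠ ξ₋, and exactly one has
absolute value greater than 1 (hyperbolic saddle). -/
theorem saddle_first_return (a c d lam : ℝ) (ha : a < 0) (hc : 0 < c)
    (hd : d < 0) (hlam : lam < 0) (hΔ : 0 < (a * d) ^ 2 - a * d * c * lam) :
    ((2 * a * d - c * lam + 2 * Real.sqrt ((a * d) ^ 2 - a * d * c * lam)) / (c * lam)) *
        ((2 * a * d - c * lam - 2 * Real.sqrt ((a * d) ^ 2 - a * d * c * lam)) / (c * lam)) = 1 ∧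
      (2 * a * d - c * lam + 2 * Real.sqrt ((a * d) ^ 2 - a * d * c * lam)) / (c * lam) ≠
        (2 * a * d - c * lam - 2 * Real.sqrt ((a * d) ^ 2 - a * d * c * lam)) / (c * lam) ∧
      ((1 < |(2 * a * d - c * lam + 2 * Real.sqrt ((a * d) ^ 2 - a * d * c * lam)) / (c * lam)| ∧
          |(2 * a * d - c * lam - 2 * Real.sqrt ((a * d) ^ 2 - a * d * c * lam)) / (c * lam)| < 1) ∨
        (|(2 * a * d - c * lam + 2 * Real.sqrt ((a * d) ^ 2 - a * d * c * lam)) / (c * lam)| < 1 ∧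
          1 < |(2 * a * d - c * lam - 2 * Real.sqrt ((a * d) ^ 2 - a * d * c * lam)) / (c * lam)|)) := by
  set Δ := (a * d) ^ 2 - a * d * c * lam with hΔdef
  set s := Real.sqrt Δ with hsdef
  have hs2 : s ^ 2 = Δ := Real.sq_sqrt hΔ.le
  have hs0 : 0 < s := Real.sqrt_pos.mpr hΔ
  have hcl : c * lam < 0 := mul_neg_of_pos_of_neg hc hlam
  have hcl0 : c * lam ≠ 0 := ne_of_lt hcl
  have had : 0 < a * d := mul_pos_of_neg_of_neg ha hd
  set P := (2 * a * d - c * lam + 2 * s) / (c * lam) with hPdef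
  set Q := (2 * a * d - c * lam - 2 * s) / (c * lam) with hQdef
  have hPQ : P * Q = 1 := by
    rw [hPdef, hQdef, div_mul_div_comm]
    rw [div_eq_one_iff_eq (by positivity)]
    nlinarith [hs2]
  have hlt : P < Q := by
    rw [hPdef, hQdef]
    apply div_lt_div_of_neg_of_lt hcl
    linarith
  -- Q < 0
  have hnum : 0 < 2 * a * d - c * lam - 2 * s := by
    have h1 : (2 * s) ^ 2 < (2 * a * d - c * lam) ^ 2 := by
      nlinarith [hs2, sq_nonneg (c * lam), mul_pos hc (neg_pos.mpr hlam)]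
    nlinarith [hs0, had, hcl]
  have hQneg : Q < 0 := div_neg_of_pos_of_neg hnum hcl
  have hPneg : P < 0 := lt_trans hlt hQneg
  have hP1 : P < -1 := by nlinarith
  have hQ1 : -1 < Q := by nlinarith
  refine ⟨hPQ, ne_of_lt hlt, Or.inl ⟨?_, ?_⟩⟩
  · rw [abs_of_neg hPneg]; linarith
  · rw [abs_of_neg hQneg]; linarith
end

section
/- Let a < 0, c > 0, d real, λ < 0. Define φ_{Z_λ} as the first return map with Δ_1(x,y) = 3λ - sqrt(9λ^2 + 36aλx - 12a^2(x^2+4y)). Then for x_0 > 0, φ_{Z_λ}(x_0, -x_0^2) = (2x_0 + 3λ/(2a), -x_0^2 - 3λ(λ + 2ax_0)/(2a^2) + d(3λ + 4ax_0)/(ac)). -/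
/-- evaluation of the perturbed first return map on the fold
curve: φ_{Z_λ}(x₀, -x₀²) = (2x₀ + 3λ/(2a), -x₀² - 3λ(λ+2ax₀)/(2a²) + d(3λ+4ax₀)/(ac)). -/
theorem perturbed_return_on_parabola (a c d lam : ℝ) (ha : a < 0) (hc : 0 < c)
    (hlam : lam < 0)
    (φ : ℝ × ℝ → ℝ × ℝ)
    (hφ : ∀ x y : ℝ, φ (x, y) =
      ((2 * a * x + (3 * lam - Real.sqrt (9 * lam ^ 2 + 36 * a * lam * x
          - 12 * a ^ 2 * (x ^ 2 + 4 * y)))) / (4 * a),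
        y + d * (2 * a * x + (3 * lam - Real.sqrt (9 * lam ^ 2 + 36 * a * lam * x
          - 12 * a ^ 2 * (x ^ 2 + 4 * y)))) / (2 * a * c)
          + lam * (-6 * a * x - (3 * lam - Real.sqrt (9 * lam ^ 2 + 36 * a * lam * x
          - 12 * a ^ 2 * (x ^ 2 + 4 * y)))) / (4 * a ^ 2))) :
    ∀ x0 : ℝ, 0 < x0 →
      φ (x0, -x0 ^ 2) = (2 * x0 + 3 * lam / (2 * a),
        -x0 ^ 2 - 3 * lam * (lam + 2 * a * x0) / (2 * a ^ 2)
          + d * (3 * lam + 4 * a * x0) / (a * c)) := by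
  intro x0 hx0
  have harg : 9 * lam ^ 2 + 36 * a * lam * x0 - 12 * a ^ 2 * (x0 ^ 2 + 4 * (-x0 ^ 2))
      = (-(3 * lam + 6 * a * x0)) ^ 2 := by ring
  have hneg : 3 * lam + 6 * a * x0 < 0 := by nlinarith
  have hs : Real.sqrt (9 * lam ^ 2 + 36 * a * lam * x0
      - 12 * a ^ 2 * (x0 ^ 2 + 4 * (-x0 ^ 2))) = -(3 * lam + 6 * a * x0) := by
    rw [harg, Real.sqrt_sq (by linarith)]
  rw [hφ, hs]
  have ha' : a ≠ 0 := ne_of_lt ha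
  have hc' : c ≠ 0 := ne_of_gt hc
  refine Prod.ext ?_ ?_ <;> simp only [] <;> field_simp <;> ring
end
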